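/- Let $(V, f)$ be a finite-dimensional complex vector space with a nondegenerate symmetric bilinear form. Then the Clifford algebra $C(V, f)$, viewed as a superalgebra with its natural $\mathbb{Z}_2$-grading, is simple: it has no nontrivial $\mathbb{Z}_2$-graded two-sided ideals. -/

import Mathlib

set_option linter.unusedSectionVars false

namespace CliffSimpleAux

variable {A : Type*} [Ring A] [Algebra ℂ A] {n : ℕ}

/-- product of generators along a list of indices -/
def P (g : Fin n → A) (l : List (Fin n)) : A := (l.map g).prod

@[simp] lemma P_nil (g : Fin n → A) : P g ([] : List (Fin n)) = 1 := rfl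

@[simp] lemma P_cons (g : Fin n → A) (i : Fin n) (l : List (Fin n)) :
    P g (i :: l) = g i * P g l := by simp [P]

lemma P_append (g : Fin n → A) (l m : List (Fin n)) :
    P g (l ++ m) = P g l * P g m := by simp [P]

@[simp] lemma P_singleton (g : Fin n → A) (i : Fin n) : P g [i] = g i := by simp

section Generic
variable {g : Fin n → A} (hsq : ∀ i, g i * g i = 1)
  (hanti : ∀ i j, i ≠ j → g i * g j = -(g j * g i))

include hsq hanti in
lemma mul_P_erase (i : Fin n) : ∀ l : List (Fin n), i ∈ l →
    ∃ k : ℕ, g i * P g l = ((-1 : ℂ) ^ k) • P g (l.erase i) := by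
  intro l
  induction l with
  | nil => simp
  | cons j t ih =>
    intro hmem
    rcases eq_or_ne i j with h | hij
    · subst h
      refine ⟨0, ?_⟩
      simp [← mul_assoc, hsq i]
    · have hit : i ∈ t := by
        rcases List.mem_cons.mp hmem with h | h
        · exact absurd h hij
        · exact h
      obtain ⟨k, hk⟩ := ih hit
      refine ⟨k + 1, ?_⟩
      have herase : (j :: t).erase i = j :: t.erase i := List.erase_cons_tail (by
        simp [Ne.symm hij])
      rw [herase, P_cons, P_cons, ← mul_assoc, hanti i j hij,
        neg_mul, mul_assoc, hk, mul_smul_comm, pow_succ, mul_comm ((-1:ℂ)^k), neg_one_mul,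
        neg_smul]

include hsq hanti in
lemma conj_P (i : Fin n) : ∀ l : List (Fin n),
    g i * P g l * g i = ((-1 : ℂ) ^ (l.length + l.count i)) • P g l := by
  intro l
  induction l with
  | nil => simp [hsq i]
  | cons j t ih =>
    rcases eq_or_ne i j with h | hij
    · subst h
      have h2 : P g t * g i = ((-1:ℂ) ^ (t.length + t.count i)) • (g i * P g t) := by
        have h3 : g i * (g i * P g t * g i) =
            g i * (((-1:ℂ) ^ (t.length + t.count i)) • P g t) := by rw [ih]
        rw [← mul_assoc, ← mul_assoc, hsq i, one_mul, mul_smul_comm] at h3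
        exact h3
      have hstep : g i * P g (i :: t) * g i = P g t * g i := by
        rw [P_cons, ← mul_assoc, hsq i, one_mul]
      rw [hstep, h2, ← P_cons]
      congr 1
      have hc : (i :: t).count i = t.count i + 1 := by simp
      have hl : (i :: t).length = t.length + 1 := rfl
      rw [hc, hl]
      have : t.length + 1 + (t.count i + 1) = (t.length + t.count i) + 2 := by ring
      rw [this, pow_add ((-1:ℂ)) (t.length + t.count i) 2, neg_one_sq, mul_one, pow_add]
    · have hstep : g i * P g (j :: t) * g i = -(g j * (g i * P g t * g i)) := by
        rw [P_cons, ← mul_assoc, hanti i j hij, neg_mul, neg_mul, mul_assoc, mul_assoc,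
          ← mul_assoc (g i) (P g t) (g i)]
      rw [hstep, ih, mul_smul_comm, ← neg_smul, ← P_cons]
      congr 1
      have hc : (j :: t).count i = t.count i := by
        simp [List.count_cons, Ne.symm hij]
      have hl : (j :: t).length = t.length + 1 := rfl
      rw [hc, hl]
      have : t.length + 1 + t.count i = (t.length + t.count i) + 1 := by ring
      rw [this, pow_succ]
      ring

include hsq hanti in
lemma P_even : ∀ (m : ℕ) (l : List (Fin n)), l.length ≤ m → (∀ i, Even (l.count i)) →
    ∃ k : ℕ, P g l = ((-1 : ℂ) ^ k) • 1 := by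
  intro m
  induction m with
  | zero =>
    intro l hl _
    have : l = [] := List.length_eq_zero_iff.mp (Nat.le_zero.mp hl)
    exact ⟨0, by simp [this]⟩
  | succ m ih =>
    intro l hl hcnt
    match l with
    | [] => exact ⟨0, by simp⟩
    | i :: t =>
      have h1 : Even (t.count i + 1) := by
        have := hcnt i
        rwa [List.count_cons_self] at this
      have hoddt : ¬ Even (t.count i) := Nat.even_add_one.mp h1
      have hit : i ∈ t := by
        by_contra h
        simp [List.count_eq_zero_of_not_mem h] at hoddt
      obtain ⟨k, hk⟩ := mul_P_erase hsq hanti i t hit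
      have hlen : (t.erase i).length ≤ m := by
        have h1 : (t.erase i).length = t.length - 1 := List.length_erase_of_mem hit
        have h2 : t.length ≤ m := by simpa using hl
        omega
      have hcnt' : ∀ j, Even ((t.erase i).count j) := by
        intro j
        rcases eq_or_ne j i with rfl | hji
        · rw [List.count_erase_self, Nat.even_sub (List.count_pos_iff.mpr hit)]
          exact iff_of_false hoddt (by decide)
        · rw [List.count_erase_of_ne hji]
          have := hcnt j
          rwa [List.count_cons_of_ne (Ne.symm hji)] at this
      obtain ⟨k', hk'⟩ := ih (t.erase i) hlen hcnt'
      refine ⟨k + k', ?_⟩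
      rw [P_cons, hk, hk', smul_smul, ← pow_add]

include hsq hanti in
lemma P_same (l₁ l₂ : List (Fin n)) (h : ∀ i, (Odd (l₁.count i) ↔ Odd (l₂.count i))) :
    ∃ c : ℂ, c ≠ 0 ∧ P g l₁ = c • P g l₂ := by
  have h1 : ∀ i, Even ((l₁ ++ l₂.reverse).count i) := by
    intro i
    rw [List.count_append, List.count_reverse]
    rcases Nat.even_or_odd (l₁.count i) with he | ho
    · have he2 : Even (l₂.count i) := by
        rcases Nat.even_or_odd (l₂.count i) with h2 | h2
        · exact h2
        · exact absurd ((h i).mpr h2) (Nat.not_odd_iff_even.mpr he)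
      exact he.add he2
    · exact Odd.add_odd ho ((h i).mp ho)
  have h2 : ∀ i, Even ((l₂.reverse ++ l₂).count i) := by
    intro i
    rw [List.count_append, List.count_reverse]
    exact ⟨l₂.count i, rfl⟩
  obtain ⟨k, hk⟩ := P_even hsq hanti (l₁ ++ l₂.reverse).length _ le_rfl h1
  obtain ⟨k', hk'⟩ := P_even hsq hanti (l₂.reverse ++ l₂).length _ le_rfl h2
  rw [P_append] at hk hk'
  have key : P g l₁ * (P g l₂.reverse * P g l₂) = ((-1:ℂ)^k) • P g l₂ := by
    rw [← mul_assoc, hk, smul_mul_assoc, one_mul]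
  rw [hk'] at key
  have key2 : ((-1:ℂ)^k') • P g l₁ = ((-1:ℂ)^k) • P g l₂ := by
    rw [← key, mul_smul_comm, mul_one]
  have hne : ((-1:ℂ)^k') ≠ 0 := pow_ne_zero _ (by norm_num)
  refine ⟨((-1:ℂ)^k')⁻¹ * (-1:ℂ)^k, mul_ne_zero (inv_ne_zero hne) (pow_ne_zero _ (by norm_num)), ?_⟩
  calc P g l₁ = ((-1:ℂ)^k')⁻¹ • (((-1:ℂ)^k') • P g l₁) := by
        rw [inv_smul_smul₀ hne]
    _ = (((-1:ℂ)^k')⁻¹ * (-1:ℂ)^k) • P g l₂ := by rw [key2, smul_smul]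

end Generic

section Cliff

variable {V : Type*} [AddCommGroup V] [Module ℂ V] (Q : QuadraticMap ℂ V ℂ) (e : Fin n → V)

open CliffordAlgebra

/-- generators -/
noncomputable def gg : Fin n → CliffordAlgebra Q := fun i => ι Q (e i)

lemma involute_P : ∀ l : List (Fin n),
    involute (P (gg Q e) l) = ((-1:ℂ) ^ l.length) • P (gg Q e) l := by
  intro l
  induction l with
  | nil => simp
  | cons i t ih =>
    rw [P_cons, map_mul, ih]
    show involute (ι Q (e i)) * _ = _
    rw [involute_ι, List.length_cons, pow_succ]
    show -(ι Q (e i)) * ((-1:ℂ) ^ t.length • P (gg Q e) t) =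
      ((-1:ℂ) ^ t.length * -1) • (ι Q (e i) * P (gg Q e) t)
    rw [neg_mul, mul_smul_comm, ← neg_smul]
    congr 1
    ring

/-- the conjugation operator `x ↦ gᵢ · involute x · gᵢ` -/
noncomputable def Uop (i : Fin n) : Module.End ℂ (CliffordAlgebra Q) :=
  (LinearMap.mulLeft ℂ (gg Q e i)) ∘ₗ (LinearMap.mulRight ℂ (gg Q e i)) ∘ₗ
    (involute (Q := Q)).toLinearMap

lemma Uop_apply (i : Fin n) (x : CliffordAlgebra Q) :
    Uop Q e i x = gg Q e i * (involute x * gg Q e i) := rfl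

variable {Q e}
variable (hsq : ∀ i, gg Q e i * gg Q e i = 1)
  (hanti : ∀ i j, i ≠ j → gg Q e i * gg Q e j = -(gg Q e j * gg Q e i))


include hsq hanti in
lemma Uop_P (i : Fin n) (l : List (Fin n)) :
    Uop Q e i (P (gg Q e) l) = ((-1:ℂ) ^ l.count i) • P (gg Q e) l := by
  rw [Uop_apply, involute_P, smul_mul_assoc, mul_smul_comm, ← mul_assoc,
    conj_P hsq hanti i l, smul_smul, ← pow_add]
  congr 1
  have : l.length + (l.length + l.count i) = 2 * l.length + l.count i := by ring
  rw [this, pow_add, pow_mul, neg_one_sq, one_pow, one_mul]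

variable (Q e) in
/-- half-sum projector factor -/
noncomputable def Aop (T : Finset (Fin n)) (i : Fin n) : Module.End ℂ (CliffordAlgebra Q) :=
  (2⁻¹ : ℂ) • (1 + (if i ∈ T then (-1:ℂ) else 1) • Uop Q e i)

include hsq hanti in
lemma Aop_P (T : Finset (Fin n)) (i : Fin n) (l : List (Fin n)) :
    Aop Q e T i (P (gg Q e) l) =
      (if (i ∈ T ↔ Odd (l.count i)) then (1:ℂ) else 0) • P (gg Q e) l := by
  have hcomb : ∀ (a b : ℂ) (x : CliffordAlgebra Q),
      (2⁻¹:ℂ) • (x + a • (b • x)) = (2⁻¹ * (1 + a * b)) • x := by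
    intro a b x
    module
  have hval : Aop Q e T i (P (gg Q e) l) =
      (2⁻¹ * (1 + (if i ∈ T then (-1:ℂ) else 1) * (-1:ℂ) ^ l.count i)) • P (gg Q e) l := by
    simp only [Aop, LinearMap.smul_apply, LinearMap.add_apply, Module.End.one_apply,
      LinearMap.smul_apply, Uop_P hsq hanti, hcomb]
  rw [hval]
  congr 1
  by_cases hT : i ∈ T
  · rcases Nat.even_or_odd (l.count i) with he | ho
    · rw [he.neg_one_pow, if_pos hT, if_neg (by simp [hT, Nat.not_odd_iff_even.mpr he])]
      norm_num
    · rw [ho.neg_one_pow, if_pos hT, if_pos (by simp [hT, ho])]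
      norm_num
  · rcases Nat.even_or_odd (l.count i) with he | ho
    · rw [he.neg_one_pow, if_neg hT, if_pos (by simp [hT, Nat.not_odd_iff_even.mpr he])]
      norm_num
    · rw [ho.neg_one_pow, if_neg hT, if_neg (by simp [hT, ho])]
      norm_num

variable (Q e) in
noncomputable def Rop (T : Finset (Fin n)) : Module.End ℂ (CliffordAlgebra Q) :=
  ((List.finRange n).map (Aop Q e T)).prod

lemma listProd_apply_smul {M : Type*} [AddCommGroup M] [Module ℂ M] (x : M) :
    ∀ (L : List (Fin n)) (F : Fin n → Module.End ℂ M) (ε : Fin n → ℂ),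
      (∀ i ∈ L, F i x = ε i • x) → ((L.map F).prod) x = ((L.map ε).prod) • x := by
  intro L
  induction L with
  | nil => intro F ε h; simp
  | cons i t ih =>
    intro F ε h
    rw [List.map_cons, List.prod_cons, List.map_cons, List.prod_cons, Module.End.mul_apply,
      ih F ε (fun j hj => h j (List.mem_cons_of_mem _ hj)), LinearMap.map_smul,
      h i (List.mem_cons_self (a := i) (l := t)), smul_smul, mul_comm]

lemma listProd_mem {M : Type*} [AddCommGroup M] [Module ℂ M] (J : Submodule ℂ M) :
    ∀ (L : List (Fin n)) (F : Fin n → Module.End ℂ M),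
      (∀ i ∈ L, ∀ x ∈ J, F i x ∈ J) → ∀ x ∈ J, ((L.map F).prod) x ∈ J := by
  intro L
  induction L with
  | nil => intro F h x hx; simpa using hx
  | cons i t ih =>
    intro F h x hx
    rw [List.map_cons, List.prod_cons, Module.End.mul_apply]
    exact h i (List.mem_cons_self (a := i) (l := t)) _
      (ih F (fun j hj => h j (List.mem_cons_of_mem _ hj)) x hx)

lemma list_prod_indicator (p : Fin n → Prop) [DecidablePred p] :
    ∀ L : List (Fin n),
      ((L.map fun i => if p i then (1:ℂ) else 0).prod) = if (∀ i ∈ L, p i) then 1 else 0 := by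
  intro L
  induction L with
  | nil => simp
  | cons i t ih =>
    rw [List.map_cons, List.prod_cons, ih]
    by_cases h : p i
    · simp [h, List.forall_mem_cons]
    · simp [h, List.forall_mem_cons]

include hsq hanti in
lemma Rop_P (T : Finset (Fin n)) (l : List (Fin n)) :
    Rop Q e T (P (gg Q e) l) =
      (if (∀ i, (i ∈ T ↔ Odd (l.count i))) then (1:ℂ) else 0) • P (gg Q e) l := by
  rw [Rop, listProd_apply_smul _ _ _ _ (fun i _ => Aop_P hsq hanti T i l),
    list_prod_indicator]
  simp [List.mem_finRange]

end Cliff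

end CliffSimpleAux


open CliffSimpleAux CliffordAlgebra in
/-- Let `(V, f)` be a finite-dimensional complex vector space equipped with a
nondegenerate symmetric bilinear form.  Then the Clifford algebra `C(V, f)`
(of the quadratic form `x ↦ f(x,x)`), endowed with its natural `ℤ₂`-grading
`CliffordAlgebra.evenOdd`, is a simple superalgebra: every `ℤ₂`-graded two-sided
ideal is trivial. -/
theorem cliffordAlgebra_graded_simple
    (V : Type*) [AddCommGroup V] [Module ℂ V] [FiniteDimensional ℂ V]
    (f : LinearMap.BilinForm ℂ V) (hsymm : f.IsSymm) (hnd : f.Nondegenerate)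
    (J : Submodule ℂ (CliffordAlgebra f.toQuadraticMap))
    (hleft : ∀ a : CliffordAlgebra f.toQuadraticMap, ∀ x ∈ J, a * x ∈ J)
    (hright : ∀ a : CliffordAlgebra f.toQuadraticMap, ∀ x ∈ J, x * a ∈ J)
    (hgraded : ∀ x ∈ J, ∀ i : ZMod 2,
      (DirectSum.decompose (CliffordAlgebra.evenOdd f.toQuadraticMap) x i :
        CliffordAlgebra f.toQuadraticMap) ∈ J) :
    J = ⊥ ∨ J = ⊤ := by
  classical
  by_cases hbot : J = ⊥
  · exact Or.inl hbot
  right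
  revert hbot hleft hright hgraded J
  set Q : QuadraticMap ℂ V ℂ := f.toQuadraticMap with hQdef
  intro J hleft hright hgraded hbot
  set n : ℕ := Module.finrank ℂ V with hndef
  haveI : Invertible (2 : ℂ) := invertibleOfNonzero two_ne_zero
  obtain ⟨b, hb⟩ := LinearMap.BilinForm.exists_orthogonal_basis (LinearMap.BilinForm.isSymm_iff.mp hsymm)
  have hbb : ∀ i, f (b i) (b i) ≠ 0 := fun i =>
    LinearMap.BilinForm.iIsOrtho.not_isOrtho_basis_self_of_nondegenerate hb hnd i
  have hex : ∀ i : Fin n, ∃ z : ℂ, z ^ 2 = (f (b i) (b i))⁻¹ := fun i =>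
    IsAlgClosed.exists_pow_nat_eq _ (by norm_num)
  choose c hc using hex
  have hcne : ∀ i, c i ≠ 0 := by
    intro i h
    have := hc i
    rw [h] at this
    exact inv_ne_zero (hbb i) (by simpa using this.symm)
  set e : Fin n → V := fun i => c i • b i with hedef
  set g : Fin n → CliffordAlgebra Q := gg Q e with hgdef
  -- the values of the form on the `e i`
  have hfee : ∀ i, f (e i) (e i) = 1 := by
    intro i
    rw [hedef]
    simp only [map_smul, LinearMap.smul_apply, smul_eq_mul]
    rw [← mul_assoc, ← sq, hc i, inv_mul_cancel₀ (hbb i)]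
  have hfe0 : ∀ i j, i ≠ j → f (e i) (e j) = 0 := by
    intro i j hij
    rw [hedef]
    simp only [map_smul, LinearMap.smul_apply, smul_eq_mul]
    have : f (b i) (b j) = 0 := hb hij
    rw [this, mul_zero, mul_zero]
  -- the generators square to 1 and anticommute
  have hsq : ∀ i, g i * g i = 1 := by
    intro i
    rw [hgdef]
    show ι Q (e i) * ι Q (e i) = 1
    rw [ι_sq_scalar]
    have : Q (e i) = 1 := by rw [hQdef]; rw [LinearMap.BilinMap.toQuadraticMap_apply, hfee i]
    rw [this, map_one]
  have hanti : ∀ i j, i ≠ j → g i * g j = -(g j * g i) := by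
    intro i j hij
    rw [hgdef]
    show ι Q (e i) * ι Q (e j) = -(ι Q (e j) * ι Q (e i))
    have hpolar : QuadraticMap.polar Q (e i) (e j) = 0 := by
      rw [hQdef, LinearMap.BilinMap.polar_toQuadraticMap, hfe0 i j hij, hfe0 j i (Ne.symm hij),
        add_zero]
    have := ι_mul_ι_add_swap (Q := Q) (e i) (e j)
    rw [hpolar, map_zero] at this
    exact eq_neg_of_add_eq_zero_left this
  -- the monomials span the Clifford algebra
  set S : Set (CliffordAlgebra Q) := Set.range (P g) with hSdef
  have hspan : Submodule.span ℂ S = ⊤ := by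
    refine Submodule.eq_top_iff'.mpr fun x => ?_
    induction x using CliffordAlgebra.induction with
    | algebraMap r =>
      rw [Algebra.algebraMap_eq_smul_one]
      exact Submodule.smul_mem _ _ (Submodule.subset_span ⟨[], rfl⟩)
    | ι v =>
      have hbmem : ∀ i, b i ∈ Submodule.span ℂ (Set.range e) := by
        intro i
        have hbi : b i = (c i)⁻¹ • e i := by
          rw [hedef]
          simp only
          rw [smul_smul, inv_mul_cancel₀ (hcne i), one_smul]
        rw [hbi]
        exact Submodule.smul_mem _ _ (Submodule.subset_span ⟨i, rfl⟩)
      have hVspan : v ∈ Submodule.span ℂ (Set.range e) := by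
        have hle : Submodule.span ℂ (Set.range ⇑b) ≤ Submodule.span ℂ (Set.range e) :=
          Submodule.span_le.mpr (by rintro _ ⟨i, rfl⟩; exact hbmem i)
        exact hle (b.span_eq ▸ Submodule.mem_top)
      have himg := Submodule.apply_mem_span_image_of_mem_span (ι Q) hVspan
      refine Submodule.span_le.mpr ?_ himg
      rintro _ ⟨_, ⟨i, rfl⟩, rfl⟩
      exact Submodule.subset_span ⟨[i], by simp [hgdef, gg, P]⟩
    | mul x y hx hy =>
      have hmm := Submodule.mul_mem_mul hx hy
      rw [Submodule.span_mul_span] at hmm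
      refine Submodule.span_le.mpr ?_ hmm
      rintro _ ⟨a1, ⟨l, rfl⟩, a2, ⟨m, rfl⟩, rfl⟩
      exact Submodule.subset_span ⟨l ++ m, by simp [P]⟩
    | add x y hx hy => exact Submodule.add_mem _ hx hy
  -- J is stable under the grade involution
  have hinvJ : ∀ x ∈ J, involute (Q := Q) x ∈ J := by
    intro x hx
    have hdec : (DirectSum.decompose (evenOdd Q) x 0 : CliffordAlgebra Q) +
        (DirectSum.decompose (evenOdd Q) x 1 : CliffordAlgebra Q) = x := by
      have hss := Finset.sum_subset
        (Finset.subset_univ (DFinsupp.support (DirectSum.decompose (evenOdd Q) x)))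
        (f := fun i => (DirectSum.decompose (evenOdd Q) x i : CliffordAlgebra Q))
        (fun i _ hi => by
          dsimp only
          rw [DFinsupp.notMem_support_iff.mp hi, ZeroMemClass.coe_zero])
      have huniv : ∑ i : ZMod 2, (DirectSum.decompose (evenOdd Q) x i : CliffordAlgebra Q)
          = x := by
        rw [← hss, DirectSum.sum_support_decompose (evenOdd Q) x]
      have huniv2 : (Finset.univ : Finset (ZMod 2)) = {0, 1} := by decide
      rw [huniv2, Finset.sum_insert (by decide), Finset.sum_singleton] at huniv
      exact huniv
    have h0 : involute (Q := Q) (DirectSum.decompose (evenOdd Q) x 0 : CliffordAlgebra Q) =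
        (DirectSum.decompose (evenOdd Q) x 0 : CliffordAlgebra Q) :=
      involute_eq_of_mem_even (SetLike.coe_mem _)
    have h1 : involute (Q := Q) (DirectSum.decompose (evenOdd Q) x 1 : CliffordAlgebra Q) =
        -(DirectSum.decompose (evenOdd Q) x 1 : CliffordAlgebra Q) :=
      involute_eq_of_mem_odd (SetLike.coe_mem _)
    have hix : involute (Q := Q) x =
        (DirectSum.decompose (evenOdd Q) x 0 : CliffordAlgebra Q) -
        (DirectSum.decompose (evenOdd Q) x 1 : CliffordAlgebra Q) := by
      conv_lhs => rw [← hdec]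
      rw [map_add, h0, h1, sub_eq_add_neg]
    rw [hix]
    exact Submodule.sub_mem _ (hgraded x hx 0) (hgraded x hx 1)
  -- the operators preserve J
  have hUJ : ∀ i, ∀ x ∈ J, Uop Q e i x ∈ J := by
    intro i x hx
    rw [Uop_apply]
    exact hleft _ _ (hright _ _ (hinvJ x hx))
  have hAJ : ∀ T i, ∀ x ∈ J, Aop Q e T i x ∈ J := by
    intro T i x hx
    simp only [Aop, LinearMap.smul_apply, LinearMap.add_apply, Module.End.one_apply]
    exact Submodule.smul_mem _ _ (Submodule.add_mem _ hx (Submodule.smul_mem _ _ (hUJ i x hx)))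
  have hRJ : ∀ T, ∀ x ∈ J, Rop Q e T x ∈ J := fun T x hx =>
    listProd_mem J _ _ (fun i _ y hy => hAJ T i y hy) x hx
  -- the projections sum to the identity
  have hsum : ∀ x : CliffordAlgebra Q, ∑ T : Finset (Fin n), Rop Q e T x = x := by
    have hext : (∑ T : Finset (Fin n), Rop Q e T) = (LinearMap.id : Module.End ℂ _) := by
      apply LinearMap.ext_on hspan
      rintro _ ⟨l, rfl⟩
      rw [LinearMap.sum_apply, LinearMap.id_apply]
      have hTl : ∀ T : Finset (Fin n),
          (∀ i, (i ∈ T ↔ Odd (l.count i))) ↔ T = Finset.univ.filter (fun i => Odd (l.count i)) := by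
        intro T
        constructor
        · intro h
          ext i
          simp [Finset.mem_filter, h i]
        · intro h i
          subst h
          simp [Finset.mem_filter]
      calc ∑ T : Finset (Fin n), Rop Q e T (P g l)
          = ∑ T : Finset (Fin n),
              (if T = Finset.univ.filter (fun i => Odd (l.count i)) then P g l else 0) := by
            refine Finset.sum_congr rfl fun T _ => ?_
            rw [Rop_P hsq hanti T l]
            by_cases h : T = Finset.univ.filter (fun i => Odd (l.count i))
            · rw [if_pos ((hTl T).mpr h), if_pos h, one_smul]
            · rw [if_neg (fun hc2 => h ((hTl T).mp hc2)), if_neg h, zero_smul]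
        _ = P g l := by rw [Finset.sum_ite_eq' Finset.univ _ (fun _ => P g l)]; simp
    intro x
    have := LinearMap.congr_fun hext x
    rwa [LinearMap.sum_apply, LinearMap.id_apply] at this
  -- each projection lands in the line spanned by a single invertible monomial
  have hRim : ∀ (T : Finset (Fin n)) (x : CliffordAlgebra Q),
      Rop Q e T x ∈ Submodule.span ℂ {P g T.toList} := by
    intro T x
    have hx : x ∈ Submodule.span ℂ S := by rw [hspan]; exact Submodule.mem_top
    induction hx using Submodule.span_induction with
    | mem y hy =>
      obtain ⟨l, rfl⟩ := hy
      rw [Rop_P hsq hanti T l]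
      by_cases h : ∀ i, (i ∈ T ↔ Odd (l.count i))
      · rw [if_pos h, one_smul]
        have hcnt : ∀ i, (Odd (l.count i) ↔ Odd (T.toList.count i)) := by
          intro i
          rw [List.Nodup.count T.nodup_toList]
          by_cases hi : i ∈ T
          · simp [hi, Finset.mem_toList, ← h i]
          · simp [hi, Finset.mem_toList, ← h i]
        obtain ⟨a, _, ha⟩ := P_same hsq hanti l T.toList hcnt
        rw [ha]
        exact Submodule.smul_mem _ _ (Submodule.mem_span_singleton_self _)
      · rw [if_neg h, zero_smul]
        exact Submodule.zero_mem _
    | zero => rw [map_zero]; exact Submodule.zero_mem _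
    | add y z _ _ hy hz => rw [map_add]; exact Submodule.add_mem _ hy hz
    | smul a y _ hy => rw [map_smul]; exact Submodule.smul_mem _ _ hy
  -- extract an invertible monomial inside J
  obtain ⟨x, hxJ, hxne⟩ := Submodule.exists_mem_ne_zero_of_ne_bot hbot
  have hsumx : ∑ T : Finset (Fin n), Rop Q e T x = x := hsum x
  have hexT : ∃ T : Finset (Fin n), Rop Q e T x ≠ 0 := by
    by_contra h
    push_neg at h
    apply hxne
    rw [← hsumx]
    exact Finset.sum_eq_zero (fun T _ => h T)
  obtain ⟨T, hTne⟩ := hexT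
  obtain ⟨a, ha⟩ := Submodule.mem_span_singleton.mp (hRim T x)
  have hane : a ≠ 0 := by
    intro h
    rw [h, zero_smul] at ha
    exact hTne ha.symm
  have heTJ : P g T.toList ∈ J := by
    have : P g T.toList = a⁻¹ • Rop Q e T x := by
      rw [← ha, inv_smul_smul₀ hane]
    rw [this]
    exact Submodule.smul_mem _ _ (hRJ T x hxJ)
  -- hence 1 ∈ J
  have hone : (1 : CliffordAlgebra Q) ∈ J := by
    have heven : ∀ i, Even ((T.toList ++ T.toList.reverse).count i) := by
      intro i
      rw [List.count_append, List.count_reverse]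
      exact ⟨T.toList.count i, rfl⟩
    obtain ⟨k, hk⟩ := P_even hsq hanti (T.toList ++ T.toList.reverse).length _ le_rfl heven
    have hmemJ : P g (T.toList ++ T.toList.reverse) ∈ J := by
      have : P g (T.toList ++ T.toList.reverse) = P g T.toList * P g T.toList.reverse := by
        simp [P]
      rw [this]
      exact hright _ _ heTJ
    rw [hk] at hmemJ
    have h1 : (1 : CliffordAlgebra Q) = ((-1:ℂ)^k)⁻¹ • (((-1:ℂ)^k) • (1 : CliffordAlgebra Q)) := by
      rw [inv_smul_smul₀ (pow_ne_zero _ (by norm_num))]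
    rw [h1]
    exact Submodule.smul_mem _ _ hmemJ
  rw [eq_top_iff]
  intro z _
  have := hleft z 1 hone
  rwa [mul_one] at this
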